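/- For every α ∈ (2/3, 1), the series ∑_{i=1}^∞ i·(2i−1)·(1−α) · (2/4^i) · ((2i−2)!/((i−1)!·(i+1)!)) · (2/α − 2)^i converges, and α + ∑_{i=1}^∞ i·(2i−1)·(1−α) · (2/4^i) · ((2i−2)!/((i−1)!·(i+1)!)) · (2/α − 2)^i = α(2α−1)/√(α(3α−2)). -/

import Mathlib

/-- The `i`-th summand `q₋ᵢ(α)·E[Bᵢ]` in the expected volume increase per peeling step:
`i·(2i−1)·(1−α) · (2/4^i) · ((2i−2)!/((i−1)!·(i+1)!)) · (2/α − 2)^i`. -/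
noncomputable def volTerm (α : ℝ) (i : ℕ) : ℝ :=
  (i : ℝ) * (2 * (i : ℝ) - 1) * (1 - α) * (2 / 4 ^ i) *
    ((Nat.factorial (2 * i - 2) : ℝ) /
      ((Nat.factorial (i - 1) : ℝ) * (Nat.factorial (i + 1) : ℝ))) *
    (2 / α - 2) ^ i

namespace EVI

open Finset

/-- Real-valued central binomial coefficient. -/
noncomputable def a (n : ℕ) : ℝ := (Nat.centralBinom n : ℝ)

lemma a_zero : a 0 = 1 := by simp [a, Nat.centralBinom]

lemma a_one : a 1 = 2 := by
  simp [a, Nat.centralBinom]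

lemma a_pos (n : ℕ) : 0 < a n := by
  simp only [a]
  exact_mod_cast Nat.centralBinom_pos n

lemma a_rec (n : ℕ) : ((n : ℝ) + 1) * a (n + 1) = 2 * (2 * n + 1) * a n := by
  have := Nat.succ_mul_centralBinom_succ n
  have : ((n + 1) * Nat.centralBinom (n + 1) : ℝ) =
      ((2 * (2 * n + 1) * Nat.centralBinom n : ℕ) : ℝ) := by exact_mod_cast congrArg (Nat.cast (R := ℝ)) this
  push_cast at this
  simpa [a] using this

lemma a_le (n : ℕ) : a n ≤ 4 ^ n := by
  have h : Nat.centralBinom n ≤ 4 ^ n := by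
    calc Nat.centralBinom n = (2 * n).choose n := Nat.centralBinom_eq_two_mul_choose n
    _ ≤ (2 * n + 1).choose n := Nat.choose_le_succ _ _
    _ ≤ 4 ^ n := Nat.choose_middle_le_pow n
  calc a n ≤ ((4 ^ n : ℕ) : ℝ) := by simp only [a]; exact_mod_cast h
  _ = 4 ^ n := by push_cast; ring

/-- `S n = ∑_{k=0}^n a k * a (n-k)`. -/
noncomputable def S (n : ℕ) : ℝ := ∑ k ∈ range (n + 1), a k * a (n - k)

/-- `U n = ∑_{k=0}^n k * a k * a (n-k)`. -/
noncomputable def U (n : ℕ) : ℝ := ∑ k ∈ range (n + 1), (k : ℝ) * a k * a (n - k)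

lemma two_U (n : ℕ) : 2 * U n = n * S n := by
  have h : U n = ∑ k ∈ range (n + 1), ((n - k : ℕ) : ℝ) * a (n - k) * a k := by
    rw [U, ← Finset.sum_range_reflect]
    apply Finset.sum_congr rfl
    intro k hk
    have hk' : k ≤ n := Nat.lt_succ_iff.mp (Finset.mem_range.mp hk)
    have e : n + 1 - 1 - k = n - k := by omega
    simp only [Nat.add_sub_cancel, e, Nat.sub_sub_self hk']
  rw [two_mul]
  nth_rewrite 1 [U]
  rw [h, S, ← Finset.sum_add_distrib, Finset.mul_sum]
  apply Finset.sum_congr rfl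
  intro k hk
  have hk' : k ≤ n := Nat.lt_succ_iff.mp (Finset.mem_range.mp hk)
  have : ((n - k : ℕ) : ℝ) = (n : ℝ) - k := by
    rw [Nat.cast_sub hk']
  rw [this]; ring

lemma U_succ (n : ℕ) : U (n + 1) = 4 * U n + 2 * S n := by
  have key : ∀ k ∈ range (n + 1), ((k + 1 : ℕ) : ℝ) * a (k + 1) * a (n + 1 - (k + 1)) =
      4 * ((k : ℝ) * a k * a (n - k)) + 2 * (a k * a (n - k)) := by
    intro k hk
    have e : n + 1 - (k + 1) = n - k := by omega
    rw [e]
    calc ((k + 1 : ℕ) : ℝ) * a (k + 1) * a (n - k)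
        = (((k : ℝ) + 1) * a (k + 1)) * a (n - k) := by push_cast; ring
      _ = (2 * (2 * (k : ℝ) + 1) * a k) * a (n - k) := by rw [a_rec k]
      _ = 4 * ((k : ℝ) * a k * a (n - k)) + 2 * (a k * a (n - k)) := by ring
  rw [U, Finset.sum_range_succ', Finset.sum_congr rfl key, Finset.sum_add_distrib,
    ← Finset.mul_sum, ← Finset.mul_sum]
  simp [U, S]

lemma S_eq (n : ℕ) : S n = 4 ^ n := by
  induction n with
  | zero => simp [S, a_zero]
  | succ n ih =>
    have h1 : 2 * U (n + 1) = (n + 1 : ℝ) * S (n + 1) := by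
      have := two_U (n + 1); push_cast at this ⊢; linarith
    have h2 : 2 * U (n + 1) = 8 * U n + 4 * S n := by rw [U_succ]; ring
    have h3 : 2 * U n = n * S n := two_U n
    have h4 : (n + 1 : ℝ) * S (n + 1) = (n + 1 : ℝ) * (4 * S n) := by
      rw [← h1, h2]; linarith
    have h5 : S (n + 1) = 4 * S n := by
      have hn : (n + 1 : ℝ) ≠ 0 := by positivity
      exact mul_left_cancel₀ hn h4
    rw [h5, ih]; ring

end EVI

open EVI Finset in
/-- For `α ∈ (2/3, 1)` the series `∑_{i≥1} i(2i−1)(1−α)(2/4^i)((2i−2)!/((i−1)!(i+1)!))(2/α−2)^i`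
converges, and adding `α` to its sum gives `α(2α−1)/√(α(3α−2))`. -/
theorem expected_volume_increase (α : ℝ) (hα : α ∈ Set.Ioo (2/3 : ℝ) 1) :
    Summable (fun i : ℕ => volTerm α (i + 1)) ∧
    α + ∑' i : ℕ, volTerm α (i + 1) =
      α * (2 * α - 1) / Real.sqrt (α * (3 * α - 2)) := by
  obtain ⟨h23, h1⟩ := hα
  have hα0 : 0 < α := by linarith
  have hαne : α ≠ 0 := ne_of_gt hα0
  set t : ℝ := (1 - α) / (2 * α) with ht_def
  have ht0 : 0 < t := by
    apply div_pos <;> linarith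
  have h4t : 4 * t < 1 := by
    have e : 4 * t = (2 - 2 * α) / α := by rw [ht_def]; field_simp; ring
    rw [e, div_lt_one hα0]
    linarith
  have h4t0 : 0 ≤ 4 * t := by linarith
  -- summability of the central binomial series
  have hbound : ∀ n : ℕ, a n * t ^ n ≤ (4 * t) ^ n := by
    intro n
    rw [mul_pow]
    exact mul_le_mul_of_nonneg_right (a_le n) (pow_nonneg ht0.le n)
  have hgeom : Summable (fun n : ℕ => (4 * t) ^ n) :=
    summable_geometric_of_lt_one h4t0 h4t
  have hA : Summable (fun n : ℕ => a n * t ^ n) := by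
    exact Summable.of_nonneg_of_le
      (fun n => mul_nonneg (a_pos n).le (pow_nonneg ht0.le n)) hbound hgeom
  set A : ℝ := ∑' n : ℕ, a n * t ^ n with hA_def
  have hApos : 0 < A := by
    apply Summable.tsum_pos hA (fun n => mul_nonneg (a_pos n).le (pow_nonneg ht0.le n)) 0
    simp [a_zero]
  -- Cauchy product: A * A = (1 - 4t)⁻¹
  have hnorm : Summable (fun n : ℕ => ‖a n * t ^ n‖) := by
    apply hA.congr
    intro n
    rw [Real.norm_eq_abs, abs_of_nonneg (mul_nonneg (a_pos n).le (pow_nonneg ht0.le n))]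
  have hAA : A * A = (1 - 4 * t)⁻¹ := by
    rw [hA_def, tsum_mul_tsum_eq_tsum_sum_antidiagonal_of_summable_norm hnorm hnorm]
    rw [← tsum_geometric_of_lt_one h4t0 h4t]
    apply tsum_congr
    intro n
    rw [Finset.Nat.sum_antidiagonal_eq_sum_range_succ_mk]
    have : ∀ k ∈ range (n + 1), a k * t ^ k * (a (n - k) * t ^ (n - k)) =
        a k * a (n - k) * t ^ n := by
      intro k hk
      have hk' : k ≤ n := Nat.lt_succ_iff.mp (Finset.mem_range.mp hk)
      rw [show a k * t ^ k * (a (n - k) * t ^ (n - k)) = a k * a (n - k) * (t ^ k * t ^ (n - k)) by ring,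
        ← pow_add, Nat.add_sub_cancel' hk']
    rw [Finset.sum_congr rfl this, ← Finset.sum_mul]
    have : (∑ k ∈ range (n + 1), a k * a (n - k)) = S n := rfl
    rw [this, S_eq, mul_pow]
  -- the per-term identity
  have ht4 : 2 / α - 2 = 4 * t := by
    rw [ht_def]; field_simp; ring
  have hterm : ∀ n : ℕ, volTerm α (n + 1) =
      α * t * (a (n + 2) - 2 * a (n + 1)) * t ^ (n + 1) := by
    intro n
    have e1 : 2 * (n + 1) - 2 = 2 * n := by omega
    have e2 : n + 1 - 1 = n := by omega
    rw [volTerm, e1, e2, ht4]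
    have ha2 : a (n + 2) = ((2 * n + 4).factorial : ℝ) /
        ((n + 2).factorial * (n + 2).factorial) := by
      rw [a, Nat.centralBinom_eq_two_mul_choose]
      rw [show 2 * (n + 2) = 2 * n + 4 by ring]
      rw [Nat.cast_choose ℝ (by omega : n + 2 ≤ 2 * n + 4),
        show 2 * n + 4 - (n + 2) = n + 2 by omega]
    have ha1 : a (n + 1) = ((2 * n + 2).factorial : ℝ) /
        ((n + 1).factorial * (n + 1).factorial) := by
      rw [a, Nat.centralBinom_eq_two_mul_choose]
      rw [show 2 * (n + 1) = 2 * n + 2 by ring]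
      rw [Nat.cast_choose ℝ (by omega : n + 1 ≤ 2 * n + 2),
        show 2 * n + 2 - (n + 1) = n + 1 by omega]
    have f1 : ((2 * n + 4).factorial : ℝ) =
        (2 * n + 4) * (2 * n + 3) * (2 * n + 2) * (2 * n + 1) * (2 * n).factorial := by
      rw [show 2 * n + 4 = (2 * n + 3) + 1 by ring, Nat.factorial_succ,
        show 2 * n + 3 = (2 * n + 2) + 1 by ring, Nat.factorial_succ,
        show 2 * n + 2 = (2 * n + 1) + 1 by ring, Nat.factorial_succ,
        show 2 * n + 1 = (2 * n) + 1 by ring, Nat.factorial_succ]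
      push_cast
      ring
    have f2 : ((2 * n + 2).factorial : ℝ) =
        (2 * n + 2) * (2 * n + 1) * (2 * n).factorial := by
      rw [show 2 * n + 2 = (2 * n + 1) + 1 by ring, Nat.factorial_succ,
        show 2 * n + 1 = (2 * n) + 1 by ring, Nat.factorial_succ]
      push_cast
      ring
    have f3 : ((n + 2).factorial : ℝ) = (n + 2) * (n + 1) * n.factorial := by
      rw [show n + 2 = (n + 1) + 1 by rfl, Nat.factorial_succ, Nat.factorial_succ]
      push_cast
      ring
    have f4 : ((n + 1).factorial : ℝ) = (n + 1) * n.factorial := by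
      rw [Nat.factorial_succ]
      push_cast
      ring
    have hnf : (n.factorial : ℝ) ≠ 0 := by positivity
    have h2nf : ((2 * n).factorial : ℝ) ≠ 0 := by positivity
    have hC : α * t = (1 - α) / 2 := by
      rw [ht_def]; field_simp
    rw [ha2, ha1, f1, f2, f3, f4, hC]
    rw [show (4 * t) ^ (n + 1) = 4 ^ (n + 1) * t ^ (n + 1) by rw [mul_pow]]
    have h4pow : (4 : ℝ) ^ (n + 1) ≠ 0 := by positivity
    field_simp
    push_cast
    ring
  -- summability
  have hf1 : Summable (fun n : ℕ => a (n + 1) * t ^ (n + 1)) := by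
    apply Summable.of_nonneg_of_le
      (fun n => mul_nonneg (a_pos _).le (pow_nonneg ht0.le _))
      (fun n => ?_) (hgeom.mul_left (4 * t))
    calc a (n + 1) * t ^ (n + 1) ≤ (4 * t) ^ (n + 1) := hbound (n + 1)
    _ = 4 * t * (4 * t) ^ n := by rw [pow_succ]; ring
  have hf2 : Summable (fun n : ℕ => a (n + 2) * t ^ (n + 1)) := by
    apply Summable.of_nonneg_of_le
      (fun n => mul_nonneg (a_pos _).le (pow_nonneg ht0.le _))
      (fun n => ?_) (hgeom.mul_left (16 * t))
    have : a (n + 2) * t ^ (n + 1) ≤ 4 ^ (n + 2) * t ^ (n + 1) :=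
      mul_le_mul_of_nonneg_right (a_le (n + 2)) (pow_nonneg ht0.le _)
    calc a (n + 2) * t ^ (n + 1) ≤ 4 ^ (n + 2) * t ^ (n + 1) := this
    _ = 16 * t * (4 * t) ^ n := by rw [mul_pow, pow_succ, pow_succ]; ring
  have hsummand : Summable (fun n : ℕ =>
      α * t * (a (n + 2) - 2 * a (n + 1)) * t ^ (n + 1)) := by
    apply Summable.congr (((hf2.sub (hf1.mul_left 2)).mul_left (α * t)))
    intro n
    ring
  have hsum : Summable (fun i : ℕ => volTerm α (i + 1)) := by
    apply hsummand.congr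
    intro n
    rw [hterm n]
  refine ⟨hsum, ?_⟩
  -- tsum computations
  have hshift1 : A = 1 + ∑' n : ℕ, a (n + 1) * t ^ (n + 1) := by
    rw [hA_def, Summable.tsum_eq_zero_add hA]
    simp [a_zero]
  have hshift2 : ∑' n : ℕ, a (n + 1) * t ^ (n + 1) =
      2 * t + ∑' n : ℕ, a (n + 2) * t ^ (n + 2) := by
    rw [Summable.tsum_eq_zero_add hf1]
    simp [a_one]
  have hpull : ∑' n : ℕ, a (n + 2) * t ^ (n + 2) =
      t * ∑' n : ℕ, a (n + 2) * t ^ (n + 1) := by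
    rw [← tsum_mul_left]
    apply tsum_congr
    intro n
    rw [pow_succ]
    ring
  set F2 : ℝ := ∑' n : ℕ, a (n + 2) * t ^ (n + 1) with hF2_def
  have hAval : A = 1 + 2 * t + t * F2 := by
    rw [hshift1, hshift2, hpull]
    ring
  have hT : ∑' i : ℕ, volTerm α (i + 1) =
      α * t * F2 - 2 * (α * t) * (A - 1) := by
    rw [tsum_congr hterm]
    have : ∀ n : ℕ, α * t * (a (n + 2) - 2 * a (n + 1)) * t ^ (n + 1) =
        α * t * (a (n + 2) * t ^ (n + 1)) - 2 * (α * t) * (a (n + 1) * t ^ (n + 1)) := by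
      intro n; ring
    rw [tsum_congr this, Summable.tsum_sub (hf2.mul_left _) (hf1.mul_left _),
      tsum_mul_left, tsum_mul_left]
    have hf1val : ∑' n : ℕ, a (n + 1) * t ^ (n + 1) = A - 1 := by
      rw [hshift1]; ring
    rw [hf1val, hF2_def]
  -- α + T = (2α - 1) * A
  have htF2 : t * F2 = A - 1 - 2 * t := by rw [hAval]; ring
  have hαtF2 : α * t * F2 = α * (A - 1 - 2 * t) := by
    rw [mul_assoc, htF2]
  have hmain : α + ∑' i : ℕ, volTerm α (i + 1) = (2 * α - 1) * A := by
    rw [hT, hαtF2]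
    have h2αt : 2 * α * t = 1 - α := by
      rw [ht_def]; field_simp
    linear_combination (-A) * h2αt
  rw [hmain]
  -- finally express A via the square root
  have h1m4t : 1 - 4 * t = (3 * α - 2) / α := by
    rw [ht_def]; field_simp; ring
  have hs0 : 0 < α * (3 * α - 2) := by nlinarith
  have hspos : 0 < Real.sqrt (α * (3 * α - 2)) := Real.sqrt_pos.mpr hs0
  set s : ℝ := Real.sqrt (α * (3 * α - 2)) with hs_def
  have hs2 : s * s = α * (3 * α - 2) := Real.mul_self_sqrt (le_of_lt hs0)
  have hA_eq : A = α / s := by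
    have hsq : A * A = (α / s) * (α / s) := by
      rw [hAA, h1m4t]
      rw [div_mul_div_comm, hs2]
      rw [inv_div]
      have h32 : (0:ℝ) < 3 * α - 2 := by linarith
      rw [div_eq_div_iff h32.ne' hs0.ne']
      ring
    have h1 : A = Real.sqrt (A * A) := (Real.sqrt_mul_self hApos.le).symm
    rw [h1, hsq, Real.sqrt_mul_self (div_nonneg hα0.le hspos.le)]
  rw [hA_eq]
  field_simp
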